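/- If Q(x), Q¹, …, Qʳ are all positive semidefinite, then the Shor SDP relaxation is exact: val(SDP_x) = val(P_x). -/

import Mathlib

open scoped Matrix
/-- The symmetric bordered matrix `[[Q, q], [qᵀ, 2b]]`. -/
def borderMat {n : ℕ} (Q : Matrix (Fin n) (Fin n) ℝ) (q : Fin n → ℝ) (b : ℝ) :
    Matrix (Fin n ⊕ Unit) (Fin n ⊕ Unit) ℝ :=
  Matrix.fromBlocks Q (Matrix.of fun i _ => q i) (Matrix.of fun _ j => q j)
    (Matrix.of fun _ _ => 2 * b)

/-- `𝒬(x) = ½[[−Q(x), q(x)], [q(x)ᵀ, 2b(x)]]`. -/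
noncomputable def objMat {n : ℕ} (Q : Matrix (Fin n) (Fin n) ℝ) (q : Fin n → ℝ) (b : ℝ) :
    Matrix (Fin n ⊕ Unit) (Fin n ⊕ Unit) ℝ :=
  (1 / 2 : ℝ) • borderMat (-Q) q b

/-- `𝒬ʲ = ½[[Qʲ, qʲ], [(qʲ)ᵀ, 2bⱼ]]`. -/
noncomputable def conMat {n : ℕ} (Q : Matrix (Fin n) (Fin n) ℝ) (q : Fin n → ℝ) (b : ℝ) :
    Matrix (Fin n ⊕ Unit) (Fin n ⊕ Unit) ℝ :=
  (1 / 2 : ℝ) • borderMat Q q b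

/-- Frobenius inner product `⟨A, B⟩ = Tr(AB)` of symmetric matrices. -/
noncomputable def frob {n : ℕ} (A B : Matrix (Fin n ⊕ Unit) (Fin n ⊕ Unit) ℝ) : ℝ :=
  (A * B).trace

/- ### Auxiliary lemmas -/

lemma psd_diag_nonneg {m : Type*} [Fintype m] [DecidableEq m] {P : Matrix m m ℝ}
    (h : P.PosSemidef) (i : m) : 0 ≤ P i i := by
  have := h.dotProduct_mulVec_nonneg (Pi.single i 1)
  simpa [Matrix.mulVec_single, single_dotProduct] using this

lemma psd_trace_nonneg {m : Type*} [Fintype m] [DecidableEq m] {P : Matrix m m ℝ}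
    (h : P.PosSemidef) : 0 ≤ P.trace := by
  unfold Matrix.trace
  exact Finset.sum_nonneg fun i _ => psd_diag_nonneg h i

lemma trace_mul_psd_nonneg {m : Type*} [Fintype m] [DecidableEq m] {P M : Matrix m m ℝ}
    (hP : P.PosSemidef) (hM : M.PosSemidef) : 0 ≤ (P * M).trace := by
  open scoped MatrixOrder in
  obtain ⟨B, rfl⟩ := CStarAlgebra.nonneg_iff_eq_star_mul_self.mp hM.nonneg
  rw [Matrix.star_eq_conjTranspose]
  have h1 : (P * (Bᴴ * B)).trace = (B * P * Bᴴ).trace := by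
    rw [← Matrix.mul_assoc, Matrix.trace_mul_comm, Matrix.mul_assoc]
  rw [h1]
  exact psd_trace_nonneg (hP.mul_mul_conjTranspose_same B)

lemma frob_expand {n : ℕ} (Q : Matrix (Fin n) (Fin n) ℝ) (q : Fin n → ℝ) (b : ℝ)
    (Y : Matrix (Fin n ⊕ Unit) (Fin n ⊕ Unit) ℝ) :
    frob ((1 / 2 : ℝ) • borderMat Q q b) Y =
      (1/2) * (∑ i, ∑ j, Q i j * Y (Sum.inl j) (Sum.inl i))
      + (1/2) * (∑ i, q i * Y (Sum.inr ()) (Sum.inl i))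
      + (1/2) * (∑ j, q j * Y (Sum.inl j) (Sum.inr ()))
      + b * Y (Sum.inr ()) (Sum.inr ()) := by
  simp only [frob, Matrix.smul_mul, Matrix.trace_smul, smul_eq_mul]
  simp only [Matrix.trace, Matrix.diag, Matrix.mul_apply, borderMat,
    Fintype.sum_sum_type, Finset.univ_unique, Finset.sum_singleton,
    Matrix.fromBlocks_apply₁₁, Matrix.fromBlocks_apply₁₂,
    Matrix.fromBlocks_apply₂₁, Matrix.fromBlocks_apply₂₂, Matrix.of_apply]
  rw [Finset.sum_add_distrib]
  ring_nf

/-- If `Q(x), Q¹, …, Qʳ` are all PSD, the Shor SDP relaxation is exact: `val(SDP_x) = val(P_x)`. -/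
theorem shor_sdp_exact {n r : ℕ}
    (Qx : Matrix (Fin n) (Fin n) ℝ) (hQx : Qx.IsSymm) (hQxpsd : Qx.PosSemidef) (qx : Fin n → ℝ) (bx : ℝ)
    (Qc : Fin r → Matrix (Fin n) (Fin n) ℝ) (hQc : ∀ j, (Qc j).IsSymm)
    (hQcpsd : ∀ j, (Qc j).PosSemidef)
    (qc : Fin r → Fin n → ℝ) (bc : Fin r → ℝ)
    (ρ : ℝ) (hρ : 0 ≤ ρ)
    (hball : ∀ y : Fin n → ℝ,
      (∀ j, (1 / 2) * (y ⬝ᵥ Qc j *ᵥ y) + qc j ⬝ᵥ y + bc j ≤ 0) → y ⬝ᵥ y ≤ ρ ^ 2)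
    (hYne : ∃ y : Fin n → ℝ, ∀ j, (1 / 2) * (y ⬝ᵥ Qc j *ᵥ y) + qc j ⬝ᵥ y + bc j ≤ 0)
    (vP vS : ℝ)
    (hP : IsLUB {v : ℝ | ∃ y : Fin n → ℝ,
      (∀ j, (1 / 2) * (y ⬝ᵥ Qc j *ᵥ y) + qc j ⬝ᵥ y + bc j ≤ 0) ∧
      v = -(1 / 2) * (y ⬝ᵥ Qx *ᵥ y) + qx ⬝ᵥ y + bx} vP)
    (hS : IsLUB {v : ℝ | ∃ Y : Matrix (Fin n ⊕ Unit) (Fin n ⊕ Unit) ℝ,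
      Y.PosSemidef ∧
      (∀ j, frob (conMat (Qc j) (qc j) (bc j)) Y ≤ 0) ∧
      Y.trace ≤ 1 + ρ ^ 2 ∧
      Y (Sum.inr ()) (Sum.inr ()) = 1 ∧
      v = frob (objMat Qx qx bx) Y} vS) :
    vP = vS := by
  apply le_antisymm
  · -- vP ≤ vS : every feasible y lifts to a feasible Y with the same value
    apply hP.2
    rintro v ⟨y, hfeas, rfl⟩
    apply hS.1
    set w : Fin n ⊕ Unit → ℝ := Sum.elim y (fun _ => 1) with hw
    refine ⟨Matrix.of fun p q => w p * w q, ?_, ?_, ?_, ?_, ?_⟩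
    · refine Matrix.PosSemidef.of_dotProduct_mulVec_nonneg ?_ ?_
      · apply Matrix.IsHermitian.ext
        intro p q
        simp [mul_comm]
      · intro z
        have hquad : star z ⬝ᵥ (Matrix.of fun p q => w p * w q) *ᵥ z
            = (∑ p, w p * z p) ^ 2 := by
          simp only [star_trivial, dotProduct, Matrix.mulVec, Matrix.of_apply, sq]
          rw [Finset.sum_mul_sum]
          apply Finset.sum_congr rfl
          intro p _
          rw [Finset.mul_sum]
          apply Finset.sum_congr rfl
          intro q _
          ring
        rw [hquad]
        positivity
    · intro j
      rw [conMat, frob_expand]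
      have h1 : ∑ i, ∑ k, Qc j i k * (Matrix.of fun p q => w p * w q) (Sum.inl k) (Sum.inl i)
          = y ⬝ᵥ Qc j *ᵥ y := by
        simp only [Matrix.of_apply, hw, Sum.elim_inl, dotProduct, Matrix.mulVec,
          Finset.mul_sum]
        apply Finset.sum_congr rfl
        intro i _
        apply Finset.sum_congr rfl
        intro k _
        ring
      have h2 : ∑ i, qc j i * (Matrix.of fun p q => w p * w q) (Sum.inr ()) (Sum.inl i)
          = qc j ⬝ᵥ y := by
        simp [hw, dotProduct]
      have h3 : ∑ i, qc j i * (Matrix.of fun p q => w p * w q) (Sum.inl i) (Sum.inr ())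
          = qc j ⬝ᵥ y := by
        simp [hw, dotProduct]
      rw [h1, h2, h3]
      have := hfeas j
      simp only [Matrix.of_apply, hw, Sum.elim_inr, mul_one]
      linarith
    · have htr : (Matrix.of fun p q => w p * w q :
          Matrix (Fin n ⊕ Unit) (Fin n ⊕ Unit) ℝ).trace = y ⬝ᵥ y + 1 := by
        simp [Matrix.trace, Matrix.diag, Fintype.sum_sum_type, hw, dotProduct]
      rw [htr]
      have := hball y hfeas
      linarith
    · simp [hw]
    · rw [objMat, frob_expand]
      have h1 : ∑ i, ∑ k, (-Qx) i k * (Matrix.of fun p q => w p * w q) (Sum.inl k) (Sum.inl i)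
          = -(y ⬝ᵥ Qx *ᵥ y) := by
        simp only [Matrix.of_apply, hw, Sum.elim_inl, dotProduct, Matrix.mulVec,
          Matrix.neg_apply, Finset.mul_sum]
        rw [← Finset.sum_neg_distrib]
        apply Finset.sum_congr rfl
        intro i _
        rw [← Finset.sum_neg_distrib]
        apply Finset.sum_congr rfl
        intro k _
        ring
      have h2 : ∑ i, qx i * (Matrix.of fun p q => w p * w q) (Sum.inr ()) (Sum.inl i)
          = qx ⬝ᵥ y := by
        simp [hw, dotProduct]
      have h3 : ∑ i, qx i * (Matrix.of fun p q => w p * w q) (Sum.inl i) (Sum.inr ())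
          = qx ⬝ᵥ y := by
        simp [hw, dotProduct]
      rw [h1, h2, h3]
      simp only [Matrix.of_apply, hw, Sum.elim_inr, mul_one]
      ring
  · -- vS ≤ vP : every feasible Y projects to a feasible y with value at least frob
    apply hS.2
    rintro v ⟨Y, hYpsd, hcon, htr, hcorner, rfl⟩
    set yv : Fin n → ℝ := fun i => Y (Sum.inl i) (Sum.inr ()) with hyv
    have hsym : ∀ p q, Y q p = Y p q := by
      intro p q
      have := hYpsd.1.apply p q
      simpa using this
    set M : Matrix (Fin n) (Fin n) ℝ :=
      Matrix.of fun i k => Y (Sum.inl i) (Sum.inl k) - yv i * yv k with hM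
    have hMpsd : M.PosSemidef := by
      refine Matrix.PosSemidef.of_dotProduct_mulVec_nonneg ?_ ?_
      · apply Matrix.IsHermitian.ext
        intro i k
        simp only [hM, Matrix.of_apply, star_trivial]
        rw [hsym (Sum.inl i) (Sum.inl k)]
        ring
      · intro z
        set c : ℝ := -(∑ i, yv i * z i) with hc
        set u : Fin n ⊕ Unit → ℝ := Sum.elim z (fun _ => c) with hu
        have key : star z ⬝ᵥ M *ᵥ z = star u ⬝ᵥ Y *ᵥ u := by
          simp only [star_trivial, dotProduct, Matrix.mulVec, Matrix.trace,
            Fintype.sum_sum_type, Finset.univ_unique, Finset.sum_singleton,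
            hu, Sum.elim_inl, Sum.elim_inr, hM, Matrix.of_apply]
          have expand : ∀ i, z i * (∑ k, (Y (Sum.inl i) (Sum.inl k) - yv i * yv k) * z k)
              = z i * (∑ k, Y (Sum.inl i) (Sum.inl k) * z k) - (z i * yv i) * (∑ k, yv k * z k) := by
            intro i
            rw [Finset.mul_sum, Finset.mul_sum, Finset.mul_sum, ← Finset.sum_sub_distrib]
            exact Finset.sum_congr rfl fun k _ => by ring
          have h6 : ∀ x, Y (Sum.inl x) (Sum.inr default) = yv x := fun _ => rfl
          have h4 : ∀ x, Y (Sum.inr default) (Sum.inl x) = yv x :=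
            fun x => hsym (Sum.inl x) (Sum.inr default)
          have h5 : Y (Sum.inr default) (Sum.inr default) = 1 := hcorner
          have hBS : ∑ x, z x * yv x = ∑ x, yv x * z x :=
            Finset.sum_congr rfl fun x _ => mul_comm _ _
          have hstep : ∑ x, z x * (∑ k, Y (Sum.inl x) (Sum.inl k) * z k + yv x * c)
              = (∑ x, z x * ∑ k, Y (Sum.inl x) (Sum.inl k) * z k) + (∑ x, z x * yv x) * c := by
            rw [Finset.sum_mul, ← Finset.sum_add_distrib]
            exact Finset.sum_congr rfl fun x _ => by ring
          calc ∑ x, z x * ∑ k, (Y (Sum.inl x) (Sum.inl k) - yv x * yv k) * z k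
              = ∑ x, (z x * (∑ k, Y (Sum.inl x) (Sum.inl k) * z k)
                  - z x * yv x * ∑ k, yv k * z k) :=
                Finset.sum_congr rfl fun i _ => expand i
            _ = (∑ x, z x * ∑ k, Y (Sum.inl x) (Sum.inl k) * z k)
                  - (∑ x, z x * yv x) * (∑ k, yv k * z k) := by
                rw [Finset.sum_sub_distrib, Finset.sum_mul]
            _ = ∑ x, z x * (∑ k, Y (Sum.inl x) (Sum.inl k) * z k
                    + Y (Sum.inl x) (Sum.inr default) * c)
                  + c * (∑ x, Y (Sum.inr default) (Sum.inl x) * z x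
                    + Y (Sum.inr default) (Sum.inr default) * c) := by
                simp only [h6, h4, h5]
                rw [hstep, hBS, hc]
                ring
        rw [key]
        exact hYpsd.dotProduct_mulVec_nonneg u
    -- trace identity for an arbitrary n×n matrix Q
    have hQtr : ∀ Q : Matrix (Fin n) (Fin n) ℝ,
        ∑ i, ∑ k, Q i k * Y (Sum.inl k) (Sum.inl i)
          = yv ⬝ᵥ Q *ᵥ yv + (Q * M).trace := by
      intro Q
      simp only [Matrix.trace, dotProduct, Matrix.diag, Matrix.mul_apply, hM,
        Matrix.of_apply, Matrix.mulVec, Finset.mul_sum]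
      rw [← Finset.sum_add_distrib]
      apply Finset.sum_congr rfl
      intro i _
      rw [← Finset.sum_add_distrib]
      apply Finset.sum_congr rfl
      intro k _
      ring
    -- feasibility of yv
    have hfeas : ∀ j, (1 / 2) * (yv ⬝ᵥ Qc j *ᵥ yv) + qc j ⬝ᵥ yv + bc j ≤ 0 := by
      intro j
      have hc := hcon j
      rw [conMat, frob_expand, hQtr] at hc
      have h2 : ∑ i, qc j i * Y (Sum.inr ()) (Sum.inl i) = qc j ⬝ᵥ yv := by
        simp only [dotProduct]
        apply Finset.sum_congr rfl
        intro i _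
        rw [hsym (Sum.inl i) (Sum.inr ())]
      have h3 : ∑ i, qc j i * Y (Sum.inl i) (Sum.inr ()) = qc j ⬝ᵥ yv := rfl
      rw [h2, h3, hcorner] at hc
      have htrm : 0 ≤ (Qc j * M).trace := trace_mul_psd_nonneg (hQcpsd j) hMpsd
      linarith
    have hyball := hball yv hfeas
    -- bound the objective
    have hobj : frob (objMat Qx qx bx) Y
        = (-(1 / 2) * (yv ⬝ᵥ Qx *ᵥ yv) + qx ⬝ᵥ yv + bx) - (1/2) * (Qx * M).trace := by
      rw [objMat, frob_expand]
      have hneg : ∑ i, ∑ k, (-Qx) i k * Y (Sum.inl k) (Sum.inl i)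
          = -(∑ i, ∑ k, Qx i k * Y (Sum.inl k) (Sum.inl i)) := by
        rw [← Finset.sum_neg_distrib]
        apply Finset.sum_congr rfl
        intro i _
        rw [← Finset.sum_neg_distrib]
        apply Finset.sum_congr rfl
        intro k _
        simp
      rw [hneg, hQtr Qx]
      have h2 : ∑ i, qx i * Y (Sum.inr ()) (Sum.inl i) = qx ⬝ᵥ yv := by
        simp only [dotProduct]
        apply Finset.sum_congr rfl
        intro i _
        rw [hsym (Sum.inl i) (Sum.inr ())]
      have h3 : ∑ i, qx i * Y (Sum.inl i) (Sum.inr ()) = qx ⬝ᵥ yv := rfl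
      rw [h2, h3, hcorner]
      ring
    have hmem : (-(1 / 2) * (yv ⬝ᵥ Qx *ᵥ yv) + qx ⬝ᵥ yv + bx) ≤ vP :=
      hP.1 ⟨yv, hfeas, rfl⟩
    have htrm : 0 ≤ (Qx * M).trace := trace_mul_psd_nonneg hQxpsd hMpsd
    rw [hobj]
    linarith
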